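/- arXiv:2210.04625 — 2 statements merged into one kernel-verified Lean document; each statement's English description precedes it below -/
import Mathlib

section
/- For a unit vector n ∈ ℝ³, the matrix exponential exp(θ n^∧) equals the Rodrigues formula cos θ · I + (1 - cos θ) · n nᵀ + sin θ · n^∧. -/
open Matrix

/-- The skew-symmetric cross-product matrix of a vector in ℝ³. -/
def hat (v : Fin 3 → ℝ) : Matrix (Fin 3) (Fin 3) ℝ :=
  !![0, -v 2, v 1; v 2, 0, -v 0; -v 1, v 0, 0]

lemma hat_vmv (n : Fin 3 → ℝ) : Matrix.vecMulVec n n * hat n = 0 := by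
  obtain ⟨a, b, c, rfl⟩ : ∃ a b c, n = ![a, b, c] :=
    ⟨n 0, n 1, n 2, by ext i; fin_cases i <;> rfl⟩
  ext i j
  fin_cases i <;> fin_cases j <;>
    simp [hat, Matrix.mul_apply, Fin.sum_univ_three, vecMulVec] <;> ring1

lemma hat_sq (n : Fin 3 → ℝ) (hn : n 0 ^ 2 + n 1 ^ 2 + n 2 ^ 2 = 1) :
    hat n ^ 2 = Matrix.vecMulVec n n - 1 := by
  obtain ⟨a, b, c, rfl⟩ : ∃ a b c, n = ![a, b, c] :=
    ⟨n 0, n 1, n 2, by ext i; fin_cases i <;> rfl⟩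
  simp only [Matrix.cons_val_zero, Matrix.cons_val_one, Matrix.head_cons,
    Matrix.cons_val_two, Matrix.tail_cons] at hn
  ext i j
  fin_cases i <;> fin_cases j <;>
    simp [hat, pow_two, Matrix.mul_apply, Fin.sum_univ_three, vecMulVec] <;>
    (first | ring1 | linear_combination -hn)

lemma hat_cube (n : Fin 3 → ℝ) (hn : n 0 ^ 2 + n 1 ^ 2 + n 2 ^ 2 = 1) :
    hat n ^ 3 = -hat n := by
  rw [pow_succ, hat_sq n hn, sub_mul, hat_vmv, one_mul, zero_sub]

lemma hat_pow_odd (n : Fin 3 → ℝ) (hn : n 0 ^ 2 + n 1 ^ 2 + n 2 ^ 2 = 1) (m : ℕ) :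
    hat n ^ (2 * m + 1) = ((-1 : ℝ) ^ m) • hat n := by
  induction m with
  | zero => simp
  | succ m ih =>
    have h : 2 * (m + 1) + 1 = (2 * m + 1) + 2 := by ring
    rw [h, pow_add, ih, smul_mul_assoc,
      show hat n * hat n ^ 2 = hat n ^ 3 from (pow_succ' _ 2).symm,
      hat_cube n hn, pow_succ, mul_smul, neg_one_smul, smul_neg]

lemma hat_pow_even (n : Fin 3 → ℝ) (hn : n 0 ^ 2 + n 1 ^ 2 + n 2 ^ 2 = 1) (m : ℕ) :
    hat n ^ (2 * m + 2) = ((-1 : ℝ) ^ m) • hat n ^ 2 := by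
  induction m with
  | zero => simp
  | succ m ih =>
    have h : 2 * (m + 1) + 2 = (2 * m + 2) + 2 := by ring
    have h4 : hat n ^ 4 = -(hat n ^ 2) := by
      rw [show hat n ^ 4 = hat n ^ 3 * hat n from pow_succ _ 3, hat_cube n hn, neg_mul, ← sq]
    rw [h, pow_add, ih, smul_mul_assoc, ← pow_add, h4, pow_succ (-1 : ℝ) m, mul_smul, neg_one_smul, smul_neg]

/-- Rodrigues formula: exp(θ n^∧) = cos θ · I + (1 - cos θ) · n nᵀ + sin θ · n^∧
for a unit vector n. -/
theorem stmt_3 (n : Fin 3 → ℝ) (hn : n 0 ^ 2 + n 1 ^ 2 + n 2 ^ 2 = 1) (θ : ℝ) :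
    NormedSpace.exp (θ • hat n)
      = Real.cos θ • (1 : Matrix (Fin 3) (Fin 3) ℝ)
        + (1 - Real.cos θ) • Matrix.vecMulVec n n + Real.sin θ • hat n := by
  have heven : HasSum (fun k : ℕ => (((2*k).factorial : ℝ)⁻¹) • (θ • hat n) ^ (2*k))
      ((1 - Real.cos θ) • hat n ^ 2 + 1) := by
    have hc := ((hasSum_nat_add_iff' 1).mpr (Real.hasSum_cos θ)).neg.smul_const (hat n ^ 2)
    have h2 : HasSum (fun m : ℕ => (((2*(m+1)).factorial : ℝ)⁻¹) • (θ • hat n) ^ (2*(m+1)))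
        ((1 - Real.cos θ) • hat n ^ 2) := by
      convert hc using 1
      · funext m
        rw [show 2*(m+1) = 2*m+2 by ring, smul_pow, hat_pow_even n hn, smul_smul, smul_smul]
        congr 1
        have hf : ((2*m+2).factorial : ℝ) ≠ 0 := Nat.cast_ne_zero.mpr (Nat.factorial_ne_zero _)
        field_simp
        ring
      · congr 1
        simp
    have h3 := (hasSum_nat_add_iff
      (f := fun k : ℕ => (((2*k).factorial : ℝ)⁻¹) • (θ • hat n) ^ (2*k)) 1).mp h2
    simpa using h3
  have hodd : HasSum (fun k : ℕ => (((2*k+1).factorial : ℝ)⁻¹) • (θ • hat n) ^ (2*k+1))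
      (Real.sin θ • hat n) := by
    have hs := (Real.hasSum_sin θ).smul_const (hat n)
    convert hs using 1
    funext m
    rw [smul_pow, hat_pow_odd n hn, smul_smul, smul_smul]
    congr 1
    have hf : ((2*m+1).factorial : ℝ) ≠ 0 := Nat.cast_ne_zero.mpr (Nat.factorial_ne_zero _)
    field_simp
  have key : HasSum (fun k : ℕ => ((k.factorial : ℝ)⁻¹) • (θ • hat n) ^ k)
      (((1 - Real.cos θ) • hat n ^ 2 + 1) + Real.sin θ • hat n) :=
    HasSum.even_add_odd heven hodd
  simp only [NormedSpace.exp_eq_tsum (𝕂 := ℝ)]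
  rw [key.tsum_eq, hat_sq n hn, smul_sub]
  module
end

section
/- Let Φ be the standard normal CDF, σ > 0, ε₀ ~ N(0, σ²) on ℝ, and q(y|x;ε) = E_ε[p(y | φ(x,ε))] for a measurable p taking values in [0,1]. If q(y_A|x;ε₀) ≥ p_A > p_B ≥ max_{y≠y_A} q(y|x;ε₀) and |α| < (σ/2)(Φ⁻¹(p_A) - Φ⁻¹(p_B)), then q(y_A|x; α+ε₀) > max_{y≠y_A} q(y|x; α+ε₀). -/
open MeasureTheory ProbabilityTheory Set

noncomputable def stdG : ℝ → ℝ := fun x => cdf (gaussianReal 0 1) x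

lemma stdG_eq : stdG = fun x => cdf (gaussianReal 0 1) x := rfl


lemma stdG_eq_integral (s : ℝ) :
    stdG s = ∫ x in Iic s, gaussianPDFReal 0 1 x := by
  rw [stdG, cdf_eq_real, measureReal_def, gaussianReal_apply_eq_integral 0 one_ne_zero,
    ENNReal.toReal_ofReal]
  exact setIntegral_nonneg measurableSet_Iic fun x _ => gaussianPDFReal_nonneg 0 1 x

lemma stdG_sub (a b : ℝ) (hab : a ≤ b) :
    stdG b - stdG a = ∫ x in Ioc a b, gaussianPDFReal 0 1 x := by
  rw [stdG_eq_integral, stdG_eq_integral, ← Iic_union_Ioc_eq_Iic hab,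
    setIntegral_union (Iic_disjoint_Ioc le_rfl) measurableSet_Ioc
      ((integrable_gaussianPDFReal 0 1).integrableOn)
      ((integrable_gaussianPDFReal 0 1).integrableOn)]
  ring

lemma stdG_strictMono : StrictMono stdG := by
  intro a b hab
  have h : 0 < ∫ x in Ioc a b, gaussianPDFReal 0 1 x := by
    rw [setIntegral_pos_iff_support_of_nonneg_ae
      (ae_of_all _ fun x => gaussianPDFReal_nonneg 0 1 x)
      ((integrable_gaussianPDFReal 0 1).integrableOn)]
    have hsupp : Function.support (gaussianPDFReal 0 1) = Set.univ := by
      ext x; simp [Function.mem_support, (gaussianPDFReal_pos 0 1 x one_ne_zero).ne']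
    rw [hsupp]
    simpa [Real.volume_Ioc] using sub_pos.mpr hab
  have := stdG_sub a b hab.le
  linarith
lemma stdG_continuous : Continuous stdG := by
  have h : Continuous fun b => ∫ x in (0:ℝ)..b, gaussianPDFReal 0 1 x :=
    (integrable_gaussianPDFReal 0 1).continuous_primitive 0
  have heq : ∀ b, stdG b = stdG 0 + ∫ x in (0:ℝ)..b, gaussianPDFReal 0 1 x := by
    intro b
    rw [stdG_eq_integral, stdG_eq_integral,
      ← intervalIntegral.integral_Iic_sub_Iic ((integrable_gaussianPDFReal 0 1).integrableOn)
      ((integrable_gaussianPDFReal 0 1).integrableOn)]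
    ring
  have : stdG = fun b => stdG 0 + ∫ x in (0:ℝ)..b, gaussianPDFReal 0 1 x := funext heq
  rw [this]
  exact continuous_const.add h

lemma stdG_surj {p : ℝ} (h0 : 0 < p) (h1 : p < 1) : ∃ z, stdG z = p := by
  obtain ⟨a, ha⟩ : ∃ a, stdG a < p := by
    have := tendsto_cdf_atBot (gaussianReal 0 1)
    have h2 := this.eventually_lt_const h0
    obtain ⟨a, ha⟩ := h2.exists
    exact ⟨a, ha⟩
  obtain ⟨b, hb⟩ : ∃ b, p < stdG b := by
    have := tendsto_cdf_atTop (gaussianReal 0 1)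
    have h2 := this.eventually_const_lt h1
    obtain ⟨b, hb⟩ := h2.exists
    exact ⟨b, hb⟩
  have hab : a ≤ b := by
    by_contra hc
    exact absurd (stdG_strictMono.monotone (le_of_not_ge hc)) (by linarith)
  obtain ⟨z, _, hz⟩ := intermediate_value_Icc hab stdG_continuous.continuousOn
    ⟨ha.le, hb.le⟩
  exact ⟨z, hz⟩

lemma gaussianReal_map_neg (m : ℝ) (v : NNReal) :
    (gaussianReal m v).map (fun x => -x) = gaussianReal (-m) v := by
  have h := gaussianReal_map_const_mul (μ := m) (v := v) (-1)
  simp only [neg_one_mul] at h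
  rw [h]
  congr 1
  ext
  push_cast
  norm_num

lemma stdG_neg (x : ℝ) : stdG (-x) = 1 - stdG x := by
  have hmap := gaussianReal_map_neg 0 1
  simp only [neg_zero] at hmap
  have h1 : gaussianReal 0 1 (Iic (-x)) = gaussianReal 0 1 (Ici x) := by
    conv_lhs => rw [← hmap]
    rw [Measure.map_apply measurable_neg measurableSet_Iic]
    congr 1
    ext y
    simp [neg_le]
  have hsing : gaussianReal 0 1 {x} = 0 :=
    gaussianReal_absolutelyContinuous 0 one_ne_zero (Real.volume_singleton)
  have h2 : gaussianReal 0 1 (Ici x) = gaussianReal 0 1 (Ioi x) := by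
    refine le_antisymm ?_ (measure_mono Ioi_subset_Ici_self)
    calc gaussianReal 0 1 (Ici x) ≤ gaussianReal 0 1 ({x} ∪ Ioi x) := by
          refine measure_mono ?_
          intro y hy
          rcases eq_or_lt_of_le (mem_Ici.mp hy) with h | h
          · exact Or.inl (by simp [h.symm])
          · exact Or.inr h
      _ ≤ gaussianReal 0 1 {x} + gaussianReal 0 1 (Ioi x) := measure_union_le _ _
      _ = gaussianReal 0 1 (Ioi x) := by rw [hsing, zero_add]
  have h3 : gaussianReal 0 1 (Ioi x) = 1 - gaussianReal 0 1 (Iic x) := by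
    rw [← Set.compl_Iic]
    rw [measure_compl measurableSet_Iic (measure_ne_top _ _)]
    simp
  have hle : gaussianReal 0 1 (Iic x) ≤ 1 := prob_le_one
  simp only [stdG, cdf_eq_real, measureReal_def]
  rw [h1, h2, h3, ENNReal.toReal_sub_of_le hle (by simp)]
  simp

lemma gaussianReal_Iic_toReal {σ : ℝ} (hσ : 0 < σ) (m s : ℝ) :
    (gaussianReal m (Real.toNNReal (σ ^ 2)) (Iic s)).toReal = stdG ((s - m) / σ) := by
  set v := Real.toNNReal (σ ^ 2) with hv
  have hvσ : (⟨σ^2, sq_nonneg _⟩ : NNReal) * 1 = v := by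
    ext; simp [hv, Real.toNNReal, max_eq_left (sq_nonneg σ)]
  have hmap1 : (gaussianReal 0 v).map (· + m) = gaussianReal m v := by
    have := gaussianReal_map_add_const (μ := 0) (v := v) m
    simpa using this
  have hmap2 : (gaussianReal 0 1).map (σ * ·) = gaussianReal 0 v := by
    have := gaussianReal_map_const_mul (μ := 0) (v := 1) σ
    rw [this, ← hvσ]
    congr 1
    simp
  have h1 : gaussianReal m v (Iic s) = gaussianReal 0 v (Iic (s - m)) := by
    rw [← hmap1, Measure.map_apply (measurable_add_const m) measurableSet_Iic]
    congr 1
    ext y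
    simp [le_sub_iff_add_le]
  have h2 : gaussianReal 0 v (Iic (s - m)) = gaussianReal 0 1 (Iic ((s - m) / σ)) := by
    rw [← hmap2, Measure.map_apply (measurable_const_mul σ) measurableSet_Iic]
    congr 1
    ext y
    simp [le_div_iff₀ hσ, mul_comm]
  rw [h1, h2, stdG, cdf_eq_real, measureReal_def]

lemma integral_gaussianReal_density {v : NNReal} (hv : v ≠ 0) (m : ℝ) (g : ℝ → ℝ)
    (hg : Measurable g) :
    ∫ x, g x ∂(gaussianReal m v) = ∫ x, gaussianPDFReal m v x * g x := by
  rw [gaussianReal_of_var_ne_zero m hv, gaussianPDF_def]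
  have : (fun x => ENNReal.ofReal (gaussianPDFReal m v x))
      = fun x => ((gaussianPDFReal m v x).toNNReal : ENNReal) := rfl
  rw [this, integral_withDensity_eq_integral_smul
    ((measurable_gaussianPDFReal m v).real_toNNReal) g]
  congr 1
  ext x
  rw [NNReal.smul_def, smul_eq_mul, Real.coe_toNNReal _ (gaussianPDFReal_nonneg m v x)]

lemma np_core {σ : ℝ} (hσ : 0 < σ) (f : ℝ → ℝ) (hm : Measurable f)
    (h0 : ∀ x, 0 ≤ f x) (h1 : ∀ x, f x ≤ 1) (z α : ℝ) (hα : 0 ≤ α)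
    (hz : stdG z ≤ ∫ x, f x ∂(gaussianReal 0 (Real.toNNReal (σ ^ 2)))) :
    stdG (z - α / σ) ≤ ∫ x, f x ∂(gaussianReal α (Real.toNNReal (σ ^ 2))) := by
  set v := Real.toNNReal (σ ^ 2) with hvdef
  have hv : v ≠ 0 := by
    simp only [hvdef, ne_eq, Real.toNNReal_eq_zero, not_le]
    positivity
  have hvR : ((v : ℝ)) = σ ^ 2 := Real.coe_toNNReal _ (sq_nonneg σ)
  have hvpos : (0 : ℝ) < (v : ℝ) := by rw [hvR]; positivity
  set τ := σ * z with hτdef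
  set pdf0 := gaussianPDFReal 0 v with hpdf0def
  set pdfα := gaussianPDFReal α v with hpdfαdef
  set c := Real.exp ((2 * α * τ - α ^ 2) / (2 * (v : ℝ))) with hcdef
  set hind : ℝ → ℝ := (Iic τ).indicator (fun _ => (1 : ℝ)) with hinddef
  set K := (Real.sqrt (2 * Real.pi * (v : ℝ)))⁻¹ with hKdef
  have hKpos : 0 < K := by
    rw [hKdef]
    have : 0 < 2 * Real.pi * (v : ℝ) := by positivity
    positivity
  have hpdfα_eq : ∀ x, pdfα x = K * Real.exp ((2 * α * x - α ^ 2 - x ^ 2) / (2 * (v : ℝ))) := by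
    intro x
    rw [hpdfαdef, gaussianPDFReal]
    congr 2
    ring
  have hcpdf0_eq : ∀ x, c * pdf0 x
      = K * Real.exp ((2 * α * τ - α ^ 2 - x ^ 2) / (2 * (v : ℝ))) := by
    intro x
    rw [hpdf0def, gaussianPDFReal, hcdef]
    rw [show Real.exp ((2 * α * τ - α ^ 2) / (2 * (v:ℝ))) * ((Real.sqrt (2 * Real.pi * (v:ℝ)))⁻¹
        * Real.exp (-(x - 0) ^ 2 / (2 * (v:ℝ))))
      = (Real.sqrt (2 * Real.pi * (v:ℝ)))⁻¹ * (Real.exp ((2 * α * τ - α ^ 2) / (2 * (v:ℝ)))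
        * Real.exp (-(x - 0) ^ 2 / (2 * (v:ℝ)))) from by ring]
    rw [← Real.exp_add]
    congr 2
    ring
  have hle_of_le : ∀ x, x ≤ τ → pdfα x ≤ c * pdf0 x := by
    intro x hx
    rw [hpdfα_eq, hcpdf0_eq]
    refine mul_le_mul_of_nonneg_left (Real.exp_le_exp.mpr ?_) hKpos.le
    apply div_le_div_of_nonneg_right ?_ (by positivity)
    nlinarith [mul_le_mul_of_nonneg_left hx hα]
  have hge_of_ge : ∀ x, τ ≤ x → c * pdf0 x ≤ pdfα x := by
    intro x hx
    rw [hpdfα_eq, hcpdf0_eq]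
    refine mul_le_mul_of_nonneg_left (Real.exp_le_exp.mpr ?_) hKpos.le
    apply div_le_div_of_nonneg_right ?_ (by positivity)
    nlinarith [mul_le_mul_of_nonneg_left hx hα]
  have key : ∀ x, 0 ≤ (f x - hind x) * (pdfα x - c * pdf0 x) := by
    intro x
    by_cases hx : x ≤ τ
    · have hh : hind x = 1 := indicator_of_mem (mem_Iic.mpr hx) _
      have h2 := hle_of_le x hx
      have h3 := h1 x
      rw [hh]
      nlinarith [mul_nonneg (by linarith : (0:ℝ) ≤ 1 - f x)
        (by linarith : (0:ℝ) ≤ c * pdf0 x - pdfα x)]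
    · have hh : hind x = 0 := indicator_of_notMem (by simpa using hx) _
      have := hge_of_ge x (le_of_not_ge hx)
      apply mul_nonneg
      · rw [hh]; linarith [h0 x]
      · linarith
  have hindm : Measurable hind := measurable_const.indicator measurableSet_Iic
  have hind0 : ∀ x, 0 ≤ hind x := fun x => indicator_nonneg (fun _ _ => zero_le_one) x
  have hind1 : ∀ x, hind x ≤ 1 := by
    intro x
    rw [hinddef]
    by_cases hx : x ∈ Iic τ <;> simp [hx]
  have int_of : ∀ (m' : ℝ) (g : ℝ → ℝ), Measurable g → (∀ x, 0 ≤ g x) → (∀ x, g x ≤ 1) →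
      Integrable (fun x => gaussianPDFReal m' v x * g x) := by
    intro m' g hgm hg0 hg1
    refine Integrable.mono' (integrable_gaussianPDFReal m' v)
      ((measurable_gaussianPDFReal m' v).mul hgm).aestronglyMeasurable
      (ae_of_all _ fun x => ?_)
    rw [Real.norm_eq_abs, abs_mul, abs_of_nonneg (gaussianPDFReal_nonneg m' v x),
      abs_of_nonneg (hg0 x)]
    calc gaussianPDFReal m' v x * g x ≤ gaussianPDFReal m' v x * 1 :=
          mul_le_mul_of_nonneg_left (hg1 x) (gaussianPDFReal_nonneg m' v x)
      _ = gaussianPDFReal m' v x := mul_one _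
  have hint1 : Integrable (fun x => pdfα x * f x) := int_of α f hm h0 h1
  have hint2 : Integrable (fun x => pdfα x * hind x) := int_of α hind hindm hind0 hind1
  have hint3 : Integrable (fun x => pdf0 x * f x) := int_of 0 f hm h0 h1
  have hint4 : Integrable (fun x => pdf0 x * hind x) := int_of 0 hind hindm hind0 hind1
  -- value of indicator integrals
  have hIic_int : ∀ m' : ℝ, ∫ x, gaussianPDFReal m' v x * hind x
      = stdG ((τ - m') / σ) := by
    intro m'
    have heq : (fun x => gaussianPDFReal m' v x * hind x)
        = (Iic τ).indicator (gaussianPDFReal m' v) := by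
      ext x
      by_cases hx : x ∈ Iic τ <;> simp [hinddef, hx]
    rw [heq, integral_indicator measurableSet_Iic]
    have h2 := gaussianReal_Iic_toReal hσ m' τ
    rw [gaussianReal_apply_eq_integral m' hv, ENNReal.toReal_ofReal
      (setIntegral_nonneg measurableSet_Iic fun x _ => gaussianPDFReal_nonneg m' v x)] at h2
    exact h2
  have Ih0_val : ∫ x, pdf0 x * hind x = stdG z := by
    rw [hpdf0def, hIic_int 0]
    congr 1
    rw [hτdef]
    field_simp
    try ring
  have Ihα_val : ∫ x, pdfα x * hind x = stdG (z - α / σ) := by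
    rw [hpdfαdef, hIic_int α]
    congr 1
    rw [hτdef]
    field_simp
    try ring
  have hI : (0 : ℝ) ≤ ∫ x, (f x - hind x) * (pdfα x - c * pdf0 x) :=
    integral_nonneg key
  have expand : (fun x => (f x - hind x) * (pdfα x - c * pdf0 x))
      = fun x => ((pdfα x * f x) - (pdfα x * hind x)) - (c * (pdf0 x * f x)
        - c * (pdf0 x * hind x)) := by
    ext x
    ring
  have hint3c : Integrable (fun x => c * (pdf0 x * f x)) := hint3.const_mul c
  have hint4c : Integrable (fun x => c * (pdf0 x * hind x)) := hint4.const_mul c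
  have A1 : Integrable (fun x => pdfα x * f x - pdfα x * hind x) := hint1.sub hint2
  have A2 : Integrable (fun x => c * (pdf0 x * f x) - c * (pdf0 x * hind x)) :=
    hint3c.sub hint4c
  rw [expand, integral_sub A1 A2, integral_sub hint1 hint2, integral_sub hint3c hint4c,
    integral_const_mul, integral_const_mul, Ih0_val, Ihα_val] at hI
  have hzf : stdG z ≤ ∫ x, pdf0 x * f x := by
    rw [hpdf0def, ← integral_gaussianReal_density hv 0 f hm]
    exact hz
  have hc0 : (0 : ℝ) ≤ c := (Real.exp_pos _).le
  rw [integral_gaussianReal_density hv α f hm, ← hpdfαdef]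
  nlinarith [mul_le_mul_of_nonneg_left hzf hc0]

lemma integrable_bdd {v : NNReal} (m : ℝ) (g : ℝ → ℝ) (hgm : Measurable g)
    (hg0 : ∀ x, 0 ≤ g x) (hg1 : ∀ x, g x ≤ 1) : Integrable g (gaussianReal m v) := by
  refine Integrable.mono' (integrable_const 1) hgm.aestronglyMeasurable
    (ae_of_all _ fun x => ?_)
  rw [Real.norm_eq_abs, abs_of_nonneg (hg0 x)]
  exact hg1 x

lemma integral_shift {v : NNReal} (m β : ℝ) (g : ℝ → ℝ) (hgm : Measurable g) :
    ∫ x, g (β + x) ∂(gaussianReal m v) = ∫ x, g x ∂(gaussianReal (m + β) v) := by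
  rw [← gaussianReal_map_add_const (μ := m) (v := v) β,
    integral_map (measurable_add_const β).aemeasurable hgm.aestronglyMeasurable]
  simp_rw [add_comm]

lemma integral_reflect {v : NNReal} (m : ℝ) (g : ℝ → ℝ) (hgm : Measurable g) :
    ∫ x, g (-x) ∂(gaussianReal m v) = ∫ x, g x ∂(gaussianReal (-m) v) := by
  rw [← gaussianReal_map_neg m v,
    integral_map measurable_neg.aemeasurable hgm.aestronglyMeasurable]

lemma np_lower {σ : ℝ} (hσ : 0 < σ) (f : ℝ → ℝ) (hm : Measurable f)
    (h0 : ∀ x, 0 ≤ f x) (h1 : ∀ x, f x ≤ 1) (z α : ℝ)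
    (hz : stdG z ≤ ∫ x, f x ∂(gaussianReal 0 (Real.toNNReal (σ ^ 2)))) :
    stdG (z - |α| / σ) ≤ ∫ x, f (α + x) ∂(gaussianReal 0 (Real.toNNReal (σ ^ 2))) := by
  set v := Real.toNNReal (σ ^ 2) with hvdef
  rw [integral_shift 0 α f hm, zero_add]
  rcases le_or_gt 0 α with hα | hα
  · rw [abs_of_nonneg hα]
    exact np_core hσ f hm h0 h1 z α hα hz
  · rw [abs_of_neg hα]
    have hrefl := integral_reflect (v := v) (-α) f hm
    rw [neg_neg] at hrefl
    rw [← hrefl]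
    have hrefl0 := integral_reflect (v := v) 0 (fun x => f (-x)) (hm.comp measurable_neg)
    simp only [neg_zero, neg_neg] at hrefl0
    refine np_core hσ (fun x => f (-x)) (hm.comp measurable_neg)
      (fun x => h0 _) (fun x => h1 _) z (-α) (by linarith) ?_
    show stdG z ≤ ∫ x, f (-x) ∂(gaussianReal 0 v)
    rw [← hrefl0]
    exact hz

lemma np_upper {σ : ℝ} (hσ : 0 < σ) (f : ℝ → ℝ) (hm : Measurable f)
    (h0 : ∀ x, 0 ≤ f x) (h1 : ∀ x, f x ≤ 1) (z α : ℝ)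
    (hz : ∫ x, f x ∂(gaussianReal 0 (Real.toNNReal (σ ^ 2))) ≤ stdG z) :
    ∫ x, f (α + x) ∂(gaussianReal 0 (Real.toNNReal (σ ^ 2))) ≤ stdG (z + |α| / σ) := by
  set v := Real.toNNReal (σ ^ 2) with hvdef
  have hsub : ∀ m : ℝ, ∫ x, (1 - f x) ∂(gaussianReal m v)
      = 1 - ∫ x, f x ∂(gaussianReal m v) := by
    intro m
    rw [integral_sub (integrable_const 1) (integrable_bdd m f hm h0 h1)]
    simp
  have h := np_lower hσ (fun x => 1 - f x) (measurable_const.sub hm)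
    (fun x => by show (0:ℝ) ≤ 1 - f x; linarith [h1 x])
    (fun x => by show 1 - f x ≤ (1:ℝ); linarith [h0 x]) (-z) α ?_
  · have hshift : ∫ x, (1 - f (α + x)) ∂(gaussianReal 0 v)
        = 1 - ∫ x, f (α + x) ∂(gaussianReal 0 v) := by
      have := integral_shift (v := v) 0 α (fun x => 1 - f x) (measurable_const.sub hm)
      have h2 := integral_shift (v := v) 0 α f hm
      rw [this, h2, hsub]
    rw [hshift] at h
    have hneg : stdG (-z - |α| / σ) = 1 - stdG (z + |α| / σ) := by
      rw [show -z - |α| / σ = -(z + |α| / σ) by ring, stdG_neg]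
    linarith
  · rw [hsub, stdG_neg]
    linarith

lemma pos_transfer {v : NNReal} (hv : v ≠ 0) (m m' : ℝ) (g : ℝ → ℝ) (hgm : Measurable g)
    (hg0 : ∀ x, 0 ≤ g x) (hg1 : ∀ x, g x ≤ 1)
    (h : 0 < ∫ x, g x ∂(gaussianReal m v)) : 0 < ∫ x, g x ∂(gaussianReal m' v) := by
  rw [integral_pos_iff_support_of_nonneg (fun x => hg0 x)
    (integrable_bdd m g hgm hg0 hg1)] at h
  rw [integral_pos_iff_support_of_nonneg (fun x => hg0 x)
    (integrable_bdd m' g hgm hg0 hg1)]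
  by_contra hc
  have h0 : gaussianReal m' v (Function.support g) = 0 := by
    by_contra h0
    exact hc (pos_iff_ne_zero.mpr h0)
  have hvol : volume (Function.support g) = 0 :=
    gaussianReal_absolutelyContinuous' m' hv h0
  have : gaussianReal m v (Function.support g) = 0 :=
    gaussianReal_absolutelyContinuous m hv hvol
  rw [this] at h
  exact lt_irrefl _ h

lemma integral_one_sub {v : NNReal} (m : ℝ) (g : ℝ → ℝ) (hgm : Measurable g)
    (hg0 : ∀ x, 0 ≤ g x) (hg1 : ∀ x, g x ≤ 1) :
    ∫ x, (1 - g x) ∂(gaussianReal m v) = 1 - ∫ x, g x ∂(gaussianReal m v) := by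
  rw [integral_sub (integrable_const 1) (integrable_bdd m g hgm hg0 hg1)]
  simp


/-- One-dimensional Gaussian randomized smoothing certification: if the smoothed class
probabilities satisfy q(y_A|x;ε₀) ≥ p_A > p_B ≥ max_{y≠y_A} q(y|x;ε₀) with ε₀ ~ N(0,σ²),
and |α| < (σ/2)(Φ⁻¹(p_A) − Φ⁻¹(p_B)), then
q(y_A|x; α+ε₀) > max_{y≠y_A} q(y|x; α+ε₀). -/
theorem stmt_11 {Y : Type*} (f : Y → ℝ → ℝ)
    (hmeas : ∀ y, Measurable (f y))
    (hrange : ∀ y ε, f y ε ∈ Set.Icc (0 : ℝ) 1)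
    (σ : ℝ) (hσ : 0 < σ)
    (μ : Measure ℝ) (hμ : μ = gaussianReal 0 (Real.toNNReal (σ ^ 2)))
    (Φ : ℝ → ℝ) (hΦ : Φ = fun x => cdf (gaussianReal 0 1) x)
    (Φinv : ℝ → ℝ) (hΦinv : Φinv = Function.invFun Φ)
    (yA : Y) (pA pB : ℝ)
    (hA : pA ≤ ∫ ε, f yA ε ∂μ)
    (hAB : pB < pA)
    (hB : ∀ y, y ≠ yA → ∫ ε, f y ε ∂μ ≤ pB)
    (α : ℝ) (hα : |α| < σ / 2 * (Φinv pA - Φinv pB)) :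
    ∀ y, y ≠ yA → ∫ ε, f y (α + ε) ∂μ < ∫ ε, f yA (α + ε) ∂μ := by
  intro y hy
  subst hμ hΦ hΦinv
  rw [← stdG_eq] at hα
  set v := Real.toNNReal (σ ^ 2) with hvdef
  have hv : v ≠ 0 := by
    simp only [hvdef, ne_eq, Real.toNNReal_eq_zero, not_le]
    positivity
  have hf0 : ∀ y' x, 0 ≤ f y' x := fun y' x => (hrange y' x).1
  have hf1 : ∀ y' x, f y' x ≤ 1 := fun y' x => (hrange y' x).2
  have hle1 : ∀ (y' : Y) (m : ℝ), ∫ ε, f y' ε ∂(gaussianReal m v) ≤ 1 := by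
    intro y' m
    calc ∫ ε, f y' ε ∂(gaussianReal m v) ≤ ∫ _, (1:ℝ) ∂(gaussianReal m v) :=
          integral_mono (integrable_bdd m (f y') (hmeas y') (hf0 y') (hf1 y'))
            (integrable_const 1) (hf1 y')
      _ = 1 := by simp
  have hge0 : ∀ (y' : Y) (m : ℝ), 0 ≤ ∫ ε, f y' ε ∂(gaussianReal m v) := by
    intro y' m
    exact integral_nonneg (hf0 y')
  have hqB0 : (0:ℝ) ≤ ∫ ε, f y ε ∂(gaussianReal 0 v) := hge0 y 0
  have hpB0 : 0 ≤ pB := le_trans hqB0 (hB y hy)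
  have hpA1 : pA ≤ 1 := le_trans hA (hle1 yA 0)
  have hpA0 : 0 < pA := lt_of_le_of_lt hpB0 hAB
  have hpB1 : pB < 1 := lt_of_lt_of_le hAB hpA1
  have eshift : ∀ y' : Y, ∫ ε, f y' (α + ε) ∂(gaussianReal 0 v)
      = ∫ x, f y' x ∂(gaussianReal α v) := by
    intro y'
    rw [integral_shift 0 α (f y') (hmeas y'), zero_add]
  rw [eshift y, eshift yA]
  rcases eq_or_lt_of_le hpB0 with hB0 | hB0
  · -- pB = 0 : all other-class mass is zero
    have hqB : ∫ ε, f y ε ∂(gaussianReal 0 v) = 0 :=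
      le_antisymm (le_trans (hB y hy) hB0.ge) hqB0
    have hApos : 0 < ∫ x, f yA x ∂(gaussianReal α v) := by
      refine pos_transfer hv 0 α (f yA) (hmeas yA) (hf0 yA) (hf1 yA) ?_
      exact lt_of_lt_of_le hpA0 hA
    have hyle : ∫ x, f y x ∂(gaussianReal α v) ≤ 0 := by
      by_contra hc
      have h2 := pos_transfer hv α 0 (f y) (hmeas y) (hf0 y) (hf1 y)
        (lt_of_not_ge hc)
      rw [hqB] at h2
      exact lt_irrefl _ h2
    linarith
  rcases eq_or_lt_of_le hpA1 with hA1 | hA1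
  · -- pA = 1 : f yA has full mass
    have hqA : ∫ ε, f yA ε ∂(gaussianReal 0 v) = 1 :=
      le_antisymm (hle1 yA 0) (hA1 ▸ hA)
    have hsub0A : ∫ x, (1 - f yA x) ∂(gaussianReal 0 v) = 0 := by
      rw [integral_one_sub 0 (f yA) (hmeas yA) (hf0 yA) (hf1 yA), hqA, sub_self]
    have hAα : ∫ x, (1 - f yA x) ∂(gaussianReal α v) ≤ 0 := by
      by_contra hc
      have h2 := pos_transfer hv α 0 (fun x => 1 - f yA x)
        (measurable_const.sub (hmeas yA))
        (fun x => by show (0:ℝ) ≤ 1 - f yA x; linarith [hf1 yA x])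
        (fun x => by show 1 - f yA x ≤ (1:ℝ); linarith [hf0 yA x])
        (lt_of_not_ge hc)
      rw [hsub0A] at h2
      exact lt_irrefl _ h2
    have hAeq : (1:ℝ) ≤ ∫ x, f yA x ∂(gaussianReal α v) := by
      rw [integral_one_sub α (f yA) (hmeas yA) (hf0 yA) (hf1 yA)] at hAα
      linarith
    have hypos : 0 < ∫ x, (1 - f y x) ∂(gaussianReal α v) := by
      refine pos_transfer hv 0 α (fun x => 1 - f y x)
        (measurable_const.sub (hmeas y))
        (fun x => by show (0:ℝ) ≤ 1 - f y x; linarith [hf1 y x])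
        (fun x => by show 1 - f y x ≤ (1:ℝ); linarith [hf0 y x]) ?_
      rw [integral_one_sub 0 (f y) (hmeas y) (hf0 y) (hf1 y)]
      have := hB y hy
      linarith
    rw [integral_one_sub α (f y) (hmeas y) (hf0 y) (hf1 y)] at hypos
    linarith
  · -- main case : 0 < pB < pA < 1
    obtain ⟨zA, hzA⟩ := stdG_surj hpA0 hA1
    obtain ⟨zB, hzB⟩ := stdG_surj hB0 hpB1
    have haA : stdG (Function.invFun stdG pA) = pA := Function.invFun_eq ⟨zA, hzA⟩
    have haB : stdG (Function.invFun stdG pB) = pB := Function.invFun_eq ⟨zB, hzB⟩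
    set a := Function.invFun stdG pA
    set b := Function.invFun stdG pB
    have hlow : stdG (a - |α| / σ) ≤ ∫ x, f yA (α + x) ∂(gaussianReal 0 v) :=
      np_lower hσ (f yA) (hmeas yA) (hf0 yA) (hf1 yA) a α (by rw [haA]; exact hA)
    have hupp : ∫ x, f y (α + x) ∂(gaussianReal 0 v) ≤ stdG (b + |α| / σ) :=
      np_upper hσ (f y) (hmeas y) (hf0 y) (hf1 y) b α (by rw [haB]; exact hB y hy)
    have hmid : stdG (b + |α| / σ) < stdG (a - |α| / σ) := by
      apply stdG_strictMono
      have h2 : |α| / σ < (a - b) / 2 := by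
        rw [div_lt_div_iff₀ hσ (by norm_num : (0:ℝ) < 2)]
        nlinarith
      linarith
    rw [eshift y, eshift yA] at *
    linarith
end
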